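/- In the differential polynomial algebra k{x,y} with at least two commuting derivations δ_1, δ_2, the element x^{δ_1 δ_1} − y^{δ_1 δ_2} does not belong to the differential subalgebra generated by x^{δ_1 δ_2} − y^{δ_2 δ_2}, and symmetrically x^{δ_1 δ_2} − y^{δ_2 δ_2} does not belong to the differential subalgebra generated by x^{δ_1 δ_1} − y^{δ_1 δ_2}. (Indeed, every homogeneous element of degree 3 of the differential subalgebra generated by u = x^{δ_1δ_2} − y^{δ_2δ_2} is a k-multiple of u.) -/

import Mathlib

open MvPolynomial

/-- The free commutative monoid of derivative operators on `m` derivations. -/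
abbrev DOp (m : ℕ) := Fin m →₀ ℕ

/-- The differential polynomial algebra `k{x_1,…,x_n}` with `m` commuting derivations:
the polynomial algebra on the variables `x_i^θ`. -/
abbrev DiffPoly (k : Type) [CommRing k] (n m : ℕ) := MvPolynomial (Fin n × DOp m) k

/-- The `i`-th derivation `δ_i` of `k{x_1,…,x_n}`, with `δ_i (x_j^θ) = x_j^{θ δ_i}`. -/
noncomputable def der (k : Type) [CommRing k] (n m : ℕ) (i : Fin m) :
    Derivation k (DiffPoly k n m) (DiffPoly k n m) :=
  MvPolynomial.mkDerivation k fun p => X (p.1, p.2 + Finsupp.single i 1)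

/-- Application of a derivative operator `θ = δ_1^{i_1} ⋯ δ_m^{i_m}`. -/
noncomputable def applyOp {k : Type} [CommRing k] {n m : ℕ} (θ : DOp m)
    (f : DiffPoly k n m) : DiffPoly k n m :=
  Fin.foldr m (fun i g => (⇑(der k n m i))^[θ i] g) f

/-- The differential subalgebra generated by a set: the smallest subalgebra containing it
and closed under all the derivations. -/
noncomputable def diffAdjoin (k : Type) [CommRing k] {n m : ℕ} (S : Set (DiffPoly k n m)) :
    Subalgebra k (DiffPoly k n m) :=
  sInf {T | S ⊆ T ∧ ∀ i : Fin m, ∀ x ∈ T, der k n m i x ∈ T}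

/-- The weight of the variable `x_j^θ`: `1 + |θ|`. -/
def dwt (n m : ℕ) : Fin n × DOp m → ℕ := fun p => 1 + p.2.sum fun _ v => v

/-- The degree of a differential polynomial. -/
noncomputable def ddeg {k : Type} [CommRing k] {n m : ℕ} (f : DiffPoly k n m) : ℕ :=
  weightedTotalDegree (dwt n m) f

/-- The highest homogeneous part of a differential polynomial. -/
noncomputable def dtop {k : Type} [CommRing k] {n m : ℕ} (f : DiffPoly k n m) :
    DiffPoly k n m :=
  weightedHomogeneousComponent (dwt n m) (ddeg f) f

/-- The variable `x` of `k{x,y}`. -/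
noncomputable def xx (k : Type) [CommRing k] (m : ℕ) : DiffPoly k 2 m := X (0, 0)

/-- The variable `y` of `k{x,y}`. -/
noncomputable def yy (k : Type) [CommRing k] (m : ℕ) : DiffPoly k 2 m := X (1, 0)

/-- A differential automorphism: an algebra automorphism commuting with all derivations. -/
def IsDiffAut {k : Type} [CommRing k] {m : ℕ}
    (φ : DiffPoly k 2 m ≃ₐ[k] DiffPoly k 2 m) : Prop :=
  ∀ i x, φ (der k 2 m i x) = der k 2 m i (φ x)

/-- An elementary automorphism: of the form `(a x + f(y), y)` or `(x, b y + g(x))`. -/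
def IsElementary {k : Type} [CommRing k] {m : ℕ}
    (φ : DiffPoly k 2 m ≃ₐ[k] DiffPoly k 2 m) : Prop :=
  IsDiffAut φ ∧
    ((∃ a : k, a ≠ 0 ∧ ∃ f ∈ diffAdjoin k {yy k m},
        φ (xx k m) = C a * xx k m + f ∧ φ (yy k m) = yy k m) ∨
     (∃ b : k, b ≠ 0 ∧ ∃ g ∈ diffAdjoin k {xx k m},
        φ (yy k m) = C b * yy k m + g ∧ φ (xx k m) = xx k m))

/-- A tame automorphism: a composition of elementary automorphisms. -/
def IsTame {k : Type} [CommRing k] {m : ℕ}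
    (φ : DiffPoly k 2 m ≃ₐ[k] DiffPoly k 2 m) : Prop :=
  φ ∈ Subgroup.closure {ψ | IsElementary ψ}

/-- An affine automorphism `(a₁x + b₁y + c₁, a₂x + b₂y + c₂)`. -/
def IsAffine {k : Type} [CommRing k] {m : ℕ}
    (φ : DiffPoly k 2 m ≃ₐ[k] DiffPoly k 2 m) : Prop :=
  IsDiffAut φ ∧ ∃ a₁ b₁ c₁ a₂ b₂ c₂ : k, a₁ * b₂ ≠ a₂ * b₁ ∧
    φ (xx k m) = C a₁ * xx k m + C b₁ * yy k m + C c₁ ∧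
    φ (yy k m) = C a₂ * xx k m + C b₂ * yy k m + C c₂

/-- A triangular automorphism `(a x + f(y), b y + c)`. -/
def IsTriangular {k : Type} [CommRing k] {m : ℕ}
    (φ : DiffPoly k 2 m ≃ₐ[k] DiffPoly k 2 m) : Prop :=
  IsDiffAut φ ∧ ∃ a b c : k, a ≠ 0 ∧ b ≠ 0 ∧ ∃ f ∈ diffAdjoin k {yy k m},
    φ (xx k m) = C a * xx k m + f ∧ φ (yy k m) = C b * yy k m + C c

/-- Membership in `C = Af₂(A) ∩ Tr₂(A)`. -/
def InC {k : Type} [CommRing k] {m : ℕ}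
    (φ : DiffPoly k 2 m ≃ₐ[k] DiffPoly k 2 m) : Prop :=
  IsAffine φ ∧ IsTriangular φ

/-- Membership in the set `A₀ = {id} ∪ {(y, x + a y) : a ∈ k}` of coset representatives. -/
def InA0 {k : Type} [CommRing k] {m : ℕ}
    (φ : DiffPoly k 2 m ≃ₐ[k] DiffPoly k 2 m) : Prop :=
  IsDiffAut φ ∧ (φ = 1 ∨ ∃ a : k,
    φ (xx k m) = yy k m ∧ φ (yy k m) = xx k m + C a * yy k m)

/-- Membership in the set `B₀ = {(x + q(y), y)}`, all homogeneous components of `q` of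
degree at least `2`, of coset representatives. -/
def InB0 {k : Type} [CommRing k] {m : ℕ}
    (φ : DiffPoly k 2 m ≃ₐ[k] DiffPoly k 2 m) : Prop :=
  IsDiffAut φ ∧ ∃ q ∈ diffAdjoin k {yy k m},
    (∀ d : ℕ, d < 2 → weightedHomogeneousComponent (dwt 2 m) d q = 0) ∧
    φ (xx k m) = xx k m + q ∧ φ (yy k m) = yy k m
section Stmt16Aux

open Finsupp

variable {k : Type} [CommRing k] {n m : ℕ}

lemma sAux_dwt_ne_zero (p : Fin n × DOp m) : dwt n m p ≠ 0 := by
  simp only [dwt]; omega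

instance sAux_nonTorsion : Finsupp.NonTorsionWeight ℕ (dwt n m) :=
  Finsupp.nonTorsionWeight_of ℕ (dwt n m) sAux_dwt_ne_zero

lemma sAux_IWH_sub {f g : DiffPoly k n m} {d : ℕ}
    (hf : IsWeightedHomogeneous (dwt n m) f d)
    (hg : IsWeightedHomogeneous (dwt n m) g d) :
    IsWeightedHomogeneous (dwt n m) (f - g) d := by
  intro s hs
  rw [coeff_sub] at hs
  by_cases h : coeff s f = 0
  · refine hg ?_
    intro h'
    rw [h, h', sub_zero] at hs
    exact hs rfl
  · exact hf h

lemma sAux_der_X (i : Fin m) (p : Fin n × DOp m) :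
    der k n m i (X p) = X (p.1, p.2 + Finsupp.single i 1) :=
  mkDerivation_X _ _ _

lemma sAux_dwt_add_single (p : Fin n × DOp m) (i : Fin m) :
    dwt n m (p.1, p.2 + Finsupp.single i 1) = dwt n m p + 1 := by
  simp only [dwt]
  rw [Finsupp.sum_add_index' (fun _ => rfl) (fun _ _ _ => rfl),
    Finsupp.sum_single_index rfl]
  omega

lemma sAux_weight_single (p : Fin n × DOp m) :
    (weight (dwt n m)) (Finsupp.single p 1) = dwt n m p := by
  rw [Finsupp.weight_apply, Finsupp.sum_single_index] <;> simp

lemma sAux_der_isWH (i : Fin m) {f : DiffPoly k n m} {d : ℕ}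
    (hf : IsWeightedHomogeneous (dwt n m) f d) :
    IsWeightedHomogeneous (dwt n m) (der k n m i f) (d + 1) := by
  classical
  rw [← mem_weightedHomogeneousSubmodule]
  rw [f.as_sum]
  rw [map_sum]
  refine Submodule.sum_mem _ fun s hs => ?_
  have hws : (weight (dwt n m)) s = d := hf (MvPolynomial.mem_support_iff.mp hs)
  show der k n m i (monomial s (coeff s f)) ∈ _
  rw [der, mkDerivation_monomial]
  refine Submodule.smul_mem _ _ ?_
  rw [Finsupp.sum]
  refine Submodule.sum_mem _ fun j hj => ?_
  rw [smul_eq_mul, mem_weightedHomogeneousSubmodule]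
  have h1 : IsWeightedHomogeneous (dwt n m)
      ((monomial (s - Finsupp.single j 1)) ((s j : k)))
      ((weight (dwt n m)) (s - Finsupp.single j 1)) :=
    isWeightedHomogeneous_monomial _ _ _ rfl
  have h2 := isWeightedHomogeneous_X (R := k) (dwt n m) (j.1, j.2 + Finsupp.single i 1)
  have key : (weight (dwt n m)) (s - Finsupp.single j 1)
      + dwt n m (j.1, j.2 + Finsupp.single i 1) = d + 1 := by
    have hsj : Finsupp.single j 1 ≤ s := by
      rw [Finsupp.single_le_iff]
      exact Nat.one_le_iff_ne_zero.mpr (Finsupp.mem_support_iff.mp hj)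
    have hcancel : (s - Finsupp.single j 1) + Finsupp.single j 1 = s :=
      tsub_add_cancel_of_le hsj
    have hadd : (weight (dwt n m)) (s - Finsupp.single j 1)
        + (weight (dwt n m)) (Finsupp.single j 1) = d := by
      rw [← map_add, hcancel, hws]
    rw [sAux_weight_single] at hadd
    rw [sAux_dwt_add_single]
    omega
  rw [← key]
  exact h1.mul h2

end Stmt16Aux
section Stmt16Aux2

open Finsupp

variable {k : Type} [CommRing k] {n m : ℕ}

lemma sAux_comp_der (i : Fin m) (f : DiffPoly k n m) (d : ℕ) :
    weightedHomogeneousComponent (dwt n m) (d + 1) (der k n m i f) =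
      der k n m i (weightedHomogeneousComponent (dwt n m) d f) := by
  classical
  have hfin := weightedHomogeneousComponent_finsupp (w := dwt n m) f
  have hsum : ∑ e ∈ hfin.toFinset,
      weightedHomogeneousComponent (dwt n m) e f = f := by
    rw [← finsum_eq_sum (fun e => weightedHomogeneousComponent (dwt n m) e f) hfin]
    exact sum_weightedHomogeneousComponent (dwt n m) f
  conv_lhs => rw [← hsum]
  rw [map_sum, map_sum]
  rw [Finset.sum_eq_single d]
  · exact (sAux_der_isWH i
      (weightedHomogeneousComponent_isWeightedHomogeneous d f)).weightedHomogeneousComponent_same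
  · intro e _ hne
    exact (sAux_der_isWH i
      (weightedHomogeneousComponent_isWeightedHomogeneous e f)).weightedHomogeneousComponent_ne
      (d + 1) (by omega)
  · intro hd
    have h0 : weightedHomogeneousComponent (dwt n m) d f = 0 := by
      by_contra h
      exact hd (hfin.mem_toFinset.mpr h)
    rw [h0]
    simp

lemma sAux_comp_der' (i : Fin m) (f : DiffPoly k n m) {d e : ℕ} (h : d = e + 1) :
    weightedHomogeneousComponent (dwt n m) d (der k n m i f) =
      der k n m i (weightedHomogeneousComponent (dwt n m) e f) := by
  subst h; exact sAux_comp_der i f e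

lemma sAux_IWH_zero_eq_C {f : DiffPoly k n m}
    (hf : IsWeightedHomogeneous (dwt n m) f 0) : f = C (coeff 0 f) := by
  ext s
  by_cases hs : s = 0
  · subst hs; simp
  · rw [coeff_C, if_neg (Ne.symm hs)]
    by_contra h
    exact hs ((Finsupp.weight_eq_zero_iff_eq_zero (dwt n m)).mp (hf h))

lemma sAux_comp_mul (f g : DiffPoly k n m) (d : ℕ) :
    weightedHomogeneousComponent (dwt n m) d (f * g) =
      ∑ e ∈ Finset.range (d + 1),
        weightedHomogeneousComponent (dwt n m) e f *
          weightedHomogeneousComponent (dwt n m) (d - e) g := by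
  classical
  have hFf := weightedHomogeneousComponent_finsupp (w := dwt n m) f
  have hFg := weightedHomogeneousComponent_finsupp (w := dwt n m) g
  have hfz : ∀ e ∉ hFf.toFinset, weightedHomogeneousComponent (dwt n m) e f = 0 := by
    intro e he
    by_contra h
    exact he (hFf.mem_toFinset.mpr h)
  have hgz : ∀ e ∉ hFg.toFinset, weightedHomogeneousComponent (dwt n m) e g = 0 := by
    intro e he
    by_contra h
    exact he (hFg.mem_toFinset.mpr h)
  have hsf : ∑ e ∈ hFf.toFinset, weightedHomogeneousComponent (dwt n m) e f = f := by
    rw [← finsum_eq_sum (fun e => weightedHomogeneousComponent (dwt n m) e f) hFf]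
    exact sum_weightedHomogeneousComponent (dwt n m) f
  have hsg : ∑ e ∈ hFg.toFinset, weightedHomogeneousComponent (dwt n m) e g = g := by
    rw [← finsum_eq_sum (fun e => weightedHomogeneousComponent (dwt n m) e g) hFg]
    exact sum_weightedHomogeneousComponent (dwt n m) g
  conv_lhs => rw [← hsf, ← hsg, Finset.sum_mul_sum]
  rw [map_sum]
  have hterm : ∀ e e', weightedHomogeneousComponent (dwt n m) d
      (weightedHomogeneousComponent (dwt n m) e f *
        weightedHomogeneousComponent (dwt n m) e' g) =
      if d = e + e' then weightedHomogeneousComponent (dwt n m) e f *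
        weightedHomogeneousComponent (dwt n m) e' g else 0 := by
    intro e e'
    have h := (weightedHomogeneousComponent_isWeightedHomogeneous e f).mul
      (weightedHomogeneousComponent_isWeightedHomogeneous (w := dwt n m) e' g)
    by_cases hd : d = e + e'
    · subst hd
      rw [if_pos rfl]
      exact h.weightedHomogeneousComponent_same
    · rw [if_neg hd]
      exact h.weightedHomogeneousComponent_ne d hd
  have hinner : ∀ e, (∑ e' ∈ hFg.toFinset,
      if d = e + e' then weightedHomogeneousComponent (dwt n m) e f *
        weightedHomogeneousComponent (dwt n m) e' g else 0) =
      if e ≤ d then weightedHomogeneousComponent (dwt n m) e f *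
        weightedHomogeneousComponent (dwt n m) (d - e) g else 0 := by
    intro e
    by_cases he : e ≤ d
    · rw [if_pos he]
      have hiff : ∀ e', (d = e + e') ↔ (e' = d - e) := by omega
      simp_rw [hiff]
      rw [Finset.sum_ite_eq' hFg.toFinset (d - e)]
      by_cases hG : d - e ∈ hFg.toFinset
      · rw [if_pos hG]
      · rw [if_neg hG, hgz _ hG, mul_zero]
    · rw [if_neg he]
      exact Finset.sum_eq_zero fun e' _ => if_neg (by omega)
  calc ∑ e ∈ hFf.toFinset, weightedHomogeneousComponent (dwt n m) d
        (∑ e' ∈ hFg.toFinset, weightedHomogeneousComponent (dwt n m) e f *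
          weightedHomogeneousComponent (dwt n m) e' g)
      = ∑ e ∈ hFf.toFinset, (if e ≤ d then weightedHomogeneousComponent (dwt n m) e f *
          weightedHomogeneousComponent (dwt n m) (d - e) g else 0) := by
        refine Finset.sum_congr rfl fun e _ => ?_
        rw [map_sum]
        simp_rw [hterm]
        exact hinner e
    _ = ∑ e ∈ hFf.toFinset ∪ Finset.range (d + 1),
          (if e ≤ d then weightedHomogeneousComponent (dwt n m) e f *
            weightedHomogeneousComponent (dwt n m) (d - e) g else 0) := by
        refine Finset.sum_subset Finset.subset_union_left fun x _ hx => ?_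
        rw [hfz x hx]
        simp
    _ = ∑ e ∈ Finset.range (d + 1),
          (if e ≤ d then weightedHomogeneousComponent (dwt n m) e f *
            weightedHomogeneousComponent (dwt n m) (d - e) g else 0) := by
        refine (Finset.sum_subset Finset.subset_union_right fun x _ hx => ?_).symm
        rw [if_neg (by simpa using hx)]
    _ = ∑ e ∈ Finset.range (d + 1),
          weightedHomogeneousComponent (dwt n m) e f *
            weightedHomogeneousComponent (dwt n m) (d - e) g := by
        refine Finset.sum_congr rfl fun e he => ?_
        rw [if_pos (by simpa [Nat.lt_succ_iff] using he)]

end Stmt16Aux2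
section Stmt16Aux3

variable {k : Type} [CommRing k] {n m : ℕ}

/-- The subalgebra of polynomials whose homogeneous components of degrees 1 and 2 vanish
and whose degree-3 component is a multiple of `w`. -/
noncomputable def sAuxT (w : DiffPoly k n m) : Subalgebra k (DiffPoly k n m) where
  carrier := {f | weightedHomogeneousComponent (dwt n m) 1 f = 0 ∧
    weightedHomogeneousComponent (dwt n m) 2 f = 0 ∧
    ∃ a : k, weightedHomogeneousComponent (dwt n m) 3 f = C a * w}
  zero_mem' := by
    refine ⟨by simp, by simp, 0, by simp⟩
  add_mem' := by
    rintro f g ⟨hf1, hf2, a, hf3⟩ ⟨hg1, hg2, b, hg3⟩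
    refine ⟨?_, ?_, a + b, ?_⟩
    · rw [map_add, hf1, hg1, add_zero]
    · rw [map_add, hf2, hg2, add_zero]
    · rw [map_add, hf3, hg3, map_add]
      ring
  one_mem' := by
    have h := isWeightedHomogeneous_one (R := k) (dwt n m)
    exact ⟨h.weightedHomogeneousComponent_ne 1 (by omega),
      h.weightedHomogeneousComponent_ne 2 (by omega), 0,
      by rw [h.weightedHomogeneousComponent_ne 3 (by omega)]; simp⟩
  mul_mem' := by
    rintro f g ⟨hf1, hf2, a, hf3⟩ ⟨hg1, hg2, b, hg3⟩
    have hf0 := sAux_IWH_zero_eq_C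
      (weightedHomogeneousComponent_isWeightedHomogeneous (w := dwt n m) 0 f)
    have hg0 := sAux_IWH_zero_eq_C
      (weightedHomogeneousComponent_isWeightedHomogeneous (w := dwt n m) 0 g)
    set cf := coeff 0 (weightedHomogeneousComponent (dwt n m) 0 f)
    set cg := coeff 0 (weightedHomogeneousComponent (dwt n m) 0 g)
    refine ⟨?_, ?_, cf * b + a * cg, ?_⟩
    · rw [sAux_comp_mul]
      simp [Finset.sum_range_succ, hf1, hg1]
    · rw [sAux_comp_mul]
      simp [Finset.sum_range_succ, hf1, hf2, hg1, hg2]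
    · rw [sAux_comp_mul]
      simp only [Finset.sum_range_succ, Finset.sum_range_zero, zero_add]
      norm_num
      rw [hf1, hf2, hf3, hg1, hg2, hg3, hf0, hg0]
      simp only [zero_mul, mul_zero, add_zero, zero_add, map_add, map_mul]
      ring
  algebraMap_mem' := by
    intro r
    have h : IsWeightedHomogeneous (dwt n m) (algebraMap k (DiffPoly k n m) r) 0 :=
      isWeightedHomogeneous_C (dwt n m) r
    exact ⟨h.weightedHomogeneousComponent_ne 1 (by omega),
      h.weightedHomogeneousComponent_ne 2 (by omega), 0,
      by rw [h.weightedHomogeneousComponent_ne 3 (by omega)]; simp⟩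

lemma sAux_mem_sAuxT {w f : DiffPoly k n m} :
    f ∈ sAuxT w ↔ (weightedHomogeneousComponent (dwt n m) 1 f = 0 ∧
      weightedHomogeneousComponent (dwt n m) 2 f = 0 ∧
      ∃ a : k, weightedHomogeneousComponent (dwt n m) 3 f = C a * w) :=
  Iff.rfl

lemma sAux_der_mem (w : DiffPoly k n m) (i : Fin m) {f : DiffPoly k n m}
    (hf : f ∈ sAuxT w) : der k n m i f ∈ sAuxT w := by
  obtain ⟨h1, h2, a, h3⟩ := hf
  refine ⟨?_, ?_, 0, ?_⟩
  · rw [sAux_comp_der' i f (by norm_num : (1:ℕ) = 0 + 1)]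
    rw [sAux_IWH_zero_eq_C
      (weightedHomogeneousComponent_isWeightedHomogeneous (w := dwt n m) 0 f)]
    simp
  · rw [sAux_comp_der' i f (by norm_num : (2:ℕ) = 1 + 1), h1]
    simp
  · rw [sAux_comp_der' i f (by norm_num : (3:ℕ) = 2 + 1), h2]
    simp

end Stmt16Aux3
section Stmt16Main

variable {k : Type} [CommRing k] {m : ℕ}

lemma sAux_u_eq (i1 i2 : Fin m) :
    der k 2 m i2 (der k 2 m i1 (xx k m)) - der k 2 m i2 (der k 2 m i2 (yy k m)) =
      (X ((0 : Fin 2), Finsupp.single i1 1 + Finsupp.single i2 1) : DiffPoly k 2 m) -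
        X ((1 : Fin 2), Finsupp.single i2 1 + Finsupp.single i2 1) := by
  rw [xx, yy, sAux_der_X, sAux_der_X, sAux_der_X, sAux_der_X]
  simp

lemma sAux_X_hom3 (j : Fin 2) (a b : Fin m) :
    IsWeightedHomogeneous (dwt 2 m)
      (X ((j : Fin 2), Finsupp.single a 1 + Finsupp.single b 1) : DiffPoly k 2 m) 3 := by
  have h : dwt 2 m (j, Finsupp.single a 1 + Finsupp.single b 1) = 3 := by
    simp only [dwt]
    rw [Finsupp.sum_add_index' (fun _ => rfl) (fun _ _ _ => rfl),
      Finsupp.sum_single_index rfl, Finsupp.sum_single_index rfl]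
    omega
  have := isWeightedHomogeneous_X (R := k) (dwt 2 m)
    (j, Finsupp.single a 1 + Finsupp.single b 1)
  rwa [h] at this

lemma sAux_adjoin_le (w : DiffPoly k 2 m) (hw : w ∈ sAuxT w) {h : DiffPoly k 2 m}
    (hh : h ∈ diffAdjoin k {w}) : h ∈ sAuxT w := by
  rw [diffAdjoin, Algebra.mem_sInf] at hh
  exact hh _ ⟨Set.singleton_subset_iff.mpr hw, fun i x hx => sAux_der_mem w i hx⟩

lemma sAux_hom3_mem_self {w : DiffPoly k 2 m}
    (hw : IsWeightedHomogeneous (dwt 2 m) w 3) : w ∈ sAuxT w :=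
  ⟨hw.weightedHomogeneousComponent_ne 1 (by omega),
    hw.weightedHomogeneousComponent_ne 2 (by omega), 1,
    by rw [hw.weightedHomogeneousComponent_same, map_one, one_mul]⟩

lemma sAux_coeff_single_X (p q : Fin 2 × DOp m) :
    coeff (Finsupp.single p 1) (X q : DiffPoly k 2 m) = if q = p then 1 else 0 := by
  rw [coeff_X']
  by_cases h : q = p
  · subst h; rw [if_pos rfl, if_pos rfl]
  · rw [if_neg h, if_neg (fun hh => h (Finsupp.single_left_injective one_ne_zero hh))]

lemma sAux_theta_ne {i1 i2 : Fin m} (h12 : i1 ≠ i2) (a : Fin m) :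
    Finsupp.single a 1 + Finsupp.single i2 1 ≠ Finsupp.single a 1 + Finsupp.single i1 1 := by
  intro h
  have := DFunLike.congr_fun h i2
  have h21 : i2 ≠ i1 := Ne.symm h12
  simp [Finsupp.single_apply, h12, h21] at this

end Stmt16Main

section Stmt16Final

variable {k : Type} [Field k] [CharZero k] {m : ℕ}

lemma sAux_main (i1 i2 : Fin m) (h12 : i1 ≠ i2) :
    (der k 2 m i1 (der k 2 m i1 (xx k m)) - der k 2 m i1 (der k 2 m i2 (yy k m)) ∉
      diffAdjoin k {der k 2 m i2 (der k 2 m i1 (xx k m)) -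
        der k 2 m i2 (der k 2 m i2 (yy k m))}) ∧
    (der k 2 m i2 (der k 2 m i1 (xx k m)) - der k 2 m i2 (der k 2 m i2 (yy k m)) ∉
      diffAdjoin k {der k 2 m i1 (der k 2 m i1 (xx k m)) -
        der k 2 m i1 (der k 2 m i2 (yy k m))}) ∧
    ∀ h ∈ diffAdjoin k {der k 2 m i2 (der k 2 m i1 (xx k m)) -
        der k 2 m i2 (der k 2 m i2 (yy k m))},
      IsWeightedHomogeneous (dwt 2 m) h 3 →
      ∃ a : k, h = C a * (der k 2 m i2 (der k 2 m i1 (xx k m)) -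
        der k 2 m i2 (der k 2 m i2 (yy k m))) := by
  set u : DiffPoly k 2 m :=
    der k 2 m i2 (der k 2 m i1 (xx k m)) - der k 2 m i2 (der k 2 m i2 (yy k m)) with hu
  set v : DiffPoly k 2 m :=
    der k 2 m i1 (der k 2 m i1 (xx k m)) - der k 2 m i1 (der k 2 m i2 (yy k m)) with hv
  have hueq : u = (X ((0 : Fin 2), Finsupp.single i1 1 + Finsupp.single i2 1) :
      DiffPoly k 2 m) - X ((1 : Fin 2), Finsupp.single i2 1 + Finsupp.single i2 1) :=
    sAux_u_eq i1 i2
  have hveq : v = (X ((0 : Fin 2), Finsupp.single i1 1 + Finsupp.single i1 1) :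
      DiffPoly k 2 m) - X ((1 : Fin 2), Finsupp.single i2 1 + Finsupp.single i1 1) := by
    rw [hv, xx, yy, sAux_der_X, sAux_der_X, sAux_der_X, sAux_der_X]
    simp
  have hu3 : IsWeightedHomogeneous (dwt 2 m) u 3 := by
    rw [hueq]; exact sAux_IWH_sub (sAux_X_hom3 _ _ _) (sAux_X_hom3 _ _ _)
  have hv3 : IsWeightedHomogeneous (dwt 2 m) v 3 := by
    rw [hveq]; exact sAux_IWH_sub (sAux_X_hom3 _ _ _) (sAux_X_hom3 _ _ _)
  have key : ∀ h ∈ diffAdjoin k {u}, IsWeightedHomogeneous (dwt 2 m) h 3 →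
      ∃ a : k, h = C a * u := by
    intro h hh hhom
    obtain ⟨_, _, a, h3⟩ := sAux_adjoin_le u (sAux_hom3_mem_self hu3) hh
    exact ⟨a, by rw [← hhom.weightedHomogeneousComponent_same, h3]⟩
  have key' : ∀ h ∈ diffAdjoin k {v}, IsWeightedHomogeneous (dwt 2 m) h 3 →
      ∃ a : k, h = C a * v := by
    intro h hh hhom
    obtain ⟨_, _, a, h3⟩ := sAux_adjoin_le v (sAux_hom3_mem_self hv3) hh
    exact ⟨a, by rw [← hhom.weightedHomogeneousComponent_same, h3]⟩
  have hfst : ∀ (θ θ' : DOp m), ((1 : Fin 2), θ) ≠ ((0 : Fin 2), θ') := by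
    intro θ θ' h
    exact (by decide : (1 : Fin 2) ≠ 0) (congrArg Prod.fst h)
  refine ⟨?_, ?_, key⟩
  · intro hmem
    obtain ⟨a, hva⟩ := key v hmem hv3
    rw [hveq, hueq] at hva
    have hc := congrArg (coeff (Finsupp.single
      ((0 : Fin 2), Finsupp.single i1 1 + Finsupp.single i1 1) 1)) hva
    have hne1 : ((1 : Fin 2), Finsupp.single i2 1 + Finsupp.single i1 1) ≠
        ((0 : Fin 2), Finsupp.single i1 1 + Finsupp.single i1 1) := hfst _ _
    have hne2 : ((0 : Fin 2), Finsupp.single i1 1 + Finsupp.single i2 1) ≠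
        ((0 : Fin 2), Finsupp.single i1 1 + Finsupp.single i1 1) := by
      intro h
      exact sAux_theta_ne h12 i1 (congrArg Prod.snd h)
    have hne3 : ((1 : Fin 2), Finsupp.single i2 1 + Finsupp.single i2 1) ≠
        ((0 : Fin 2), Finsupp.single i1 1 + Finsupp.single i1 1) := hfst _ _
    simp only [coeff_sub, mul_sub, coeff_C_mul, sAux_coeff_single_X,
      if_pos rfl, if_neg hne1, if_neg hne2, if_neg hne3] at hc
    simp at hc
  · intro hmem
    obtain ⟨a, hua⟩ := key' u hmem hu3
    rw [hveq, hueq] at hua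
    have hc := congrArg (coeff (Finsupp.single
      ((0 : Fin 2), Finsupp.single i1 1 + Finsupp.single i2 1) 1)) hua
    have hne1 : ((1 : Fin 2), Finsupp.single i2 1 + Finsupp.single i2 1) ≠
        ((0 : Fin 2), Finsupp.single i1 1 + Finsupp.single i2 1) := hfst _ _
    have hne2 : ((0 : Fin 2), Finsupp.single i1 1 + Finsupp.single i1 1) ≠
        ((0 : Fin 2), Finsupp.single i1 1 + Finsupp.single i2 1) := by
      intro h
      exact sAux_theta_ne (Ne.symm h12) i1 (congrArg Prod.snd h)
    have hne3 : ((1 : Fin 2), Finsupp.single i2 1 + Finsupp.single i1 1) ≠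
        ((0 : Fin 2), Finsupp.single i1 1 + Finsupp.single i2 1) := hfst _ _
    simp only [coeff_sub, mul_sub, coeff_C_mul, sAux_coeff_single_X,
      if_pos rfl, if_neg hne1, if_neg hne2, if_neg hne3] at hc
    simp at hc

end Stmt16Final

/-- The element `x^{δ₁δ₁} - y^{δ₁δ₂}` is not in the differential subalgebra generated by
`u = x^{δ₁δ₂} - y^{δ₂δ₂}`, and symmetrically; moreover every homogeneous element of
degree `3` of the differential subalgebra generated by `u` is a `k`-multiple of `u`. -/
theorem stmt16 {k : Type} [Field k] [CharZero k] {m : ℕ} (hm : 2 ≤ m) :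
    let i1 : Fin m := ⟨0, by omega⟩
    let i2 : Fin m := ⟨1, by omega⟩
    let u : DiffPoly k 2 m :=
      der k 2 m i2 (der k 2 m i1 (xx k m)) - der k 2 m i2 (der k 2 m i2 (yy k m))
    let v : DiffPoly k 2 m :=
      der k 2 m i1 (der k 2 m i1 (xx k m)) - der k 2 m i1 (der k 2 m i2 (yy k m))
    v ∉ diffAdjoin k {u} ∧ u ∉ diffAdjoin k {v} ∧
      ∀ h ∈ diffAdjoin k {u}, IsWeightedHomogeneous (dwt 2 m) h 3 →
        ∃ a : k, h = C a * u := by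
  intro i1 i2 u v
  exact sAux_main i1 i2 (Fin.ne_of_val_ne Nat.zero_ne_one)
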